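/- Let G be a group and H a finite almost normal subgroup of G whose center is trivial. Then the centralizer Z_H = {g ∈ G : gh = hg for all h ∈ H} has finite index in G, and H ∩ R(G) = {1}, where R(G) is the intersection of all finite-index subgroups of G. -/

import Mathlib

/-- `R(G)`: the intersection of all finite-index subgroups of `G`. -/
def residualSubgroup (G : Type*) [Group G] : Subgroup G :=
  ⨅ (H : Subgroup G) (_ : H.FiniteIndex), H

/-- Let `H` be a finite almost normal subgroup of `G` with trivial center
(`C_H = Z_H ∩ H = {1}`, where `Z_H` is the centralizer of `H` in `G`). Then `Z_H` has finite
index in `G` and `H ∩ R(G) = {1}`. -/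
theorem stmt18 {G : Type*} [Group G]
    (H : Subgroup G) (hfin : (H : Set G).Finite) (hAN : (Subgroup.normalizer (H : Set G)).FiniteIndex)
    (hcenter : Subgroup.centralizer (H : Set G) ⊓ H = ⊥) :
    (Subgroup.centralizer (H : Set G)).FiniteIndex ∧
    H ⊓ residualSubgroup G = ⊥ := by
  set Z := Subgroup.centralizer (H : Set G) with hZdef
  set N := Subgroup.normalizer (H : Set G) with hNdef
  -- the centralizer is contained in the normalizer
  have hZN : Z ≤ N := by
    intro g hg
    rw [hZdef, Subgroup.mem_centralizer_iff] at hg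
    rw [hNdef, Subgroup.mem_normalizer_iff]
    intro h
    constructor
    · intro hh
      have e := hg h hh
      have : g * h * g⁻¹ = h := by
        rw [mul_inv_eq_iff_eq_mul, ← e]
      rw [this]; exact hh
    · intro hh
      have e := hg _ hh
      -- (g h g⁻¹) * g = g * (g h g⁻¹)  ⇒  h = g h g⁻¹
      have : h = g * h * g⁻¹ := by
        have : g * h * g⁻¹ * g = g * (g * h * g⁻¹) := e
        have h2 : g * h = g * (g * h * g⁻¹) := by
          rw [← this]; group
        have := mul_left_cancel h2
        exact this
      rw [this]; exact hh
  haveI hHfin : Finite ((H : Set G) : Type _) := hfin.to_subtype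
  haveI hHfin' : Finite H := hHfin
  -- conjugation map from N to maps H → H
  let c : N → (H → H) := fun n h =>
    ⟨(n : G) * (h : G) * (n : G)⁻¹, (Subgroup.mem_normalizer_iff.mp n.2 h).mp h.2⟩
  have key : ∀ a b : N, c a = c b ↔ (a : G)⁻¹ * (b : G) ∈ Z := by
    intro a b
    constructor
    · intro e
      rw [hZdef, Subgroup.mem_centralizer_iff]
      intro h hh
      have e1 : (a : G) * h * (a : G)⁻¹ = (b : G) * h * (b : G)⁻¹ := by
        have := congrFun e ⟨h, hh⟩
        exact congrArg Subtype.val this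
      calc h * ((a : G)⁻¹ * b) = (a : G)⁻¹ * ((a : G) * h * (a : G)⁻¹) * b := by group
        _ = (a : G)⁻¹ * ((b : G) * h * (b : G)⁻¹) * b := by rw [e1]
        _ = ((a : G)⁻¹ * b) * h := by group
    · intro hm
      rw [hZdef, Subgroup.mem_centralizer_iff] at hm
      funext h
      apply Subtype.ext
      show (a : G) * h * (a : G)⁻¹ = (b : G) * h * (b : G)⁻¹
      have e := hm h h.2
      calc (a : G) * h * (a : G)⁻¹
          = (a : G) * (h * ((a : G)⁻¹ * b)) * (b : G)⁻¹ := by group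
        _ = (a : G) * (((a : G)⁻¹ * b) * h) * (b : G)⁻¹ := by rw [e]
        _ = (b : G) * h * (b : G)⁻¹ := by group
  -- the quotient N ⧸ (Z.subgroupOf N) is finite
  haveI : Finite (N ⧸ Z.subgroupOf N) := by
    apply Finite.of_injective
      (f := fun q : N ⧸ Z.subgroupOf N => Quotient.liftOn' q c ?_)
    · intro q1 q2
      induction q1 using Quotient.inductionOn'
      induction q2 using Quotient.inductionOn'
      rename_i a b
      intro e
      simp only [Quotient.liftOn'_mk''] at e
      apply Quotient.sound'
      rw [QuotientGroup.leftRel_apply]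
      show a⁻¹ * b ∈ Z.subgroupOf N
      rw [Subgroup.mem_subgroupOf]
      exact (key a b).mp e
    · intro a b hab
      rw [QuotientGroup.leftRel_apply, Subgroup.mem_subgroupOf] at hab
      exact (key a b).mpr hab
  haveI hrel : (Z.subgroupOf N).FiniteIndex := Subgroup.finiteIndex_of_finite_quotient
  have hZfi : Z.FiniteIndex := by
    constructor
    rw [← Subgroup.relIndex_mul_index hZN]
    exact Nat.mul_ne_zero hrel.index_ne_zero hAN.index_ne_zero
  refine ⟨hZfi, ?_⟩
  have hRZ : residualSubgroup G ≤ Z := by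
    apply iInf_le_of_le Z
    exact iInf_le _ hZfi
  have : H ⊓ residualSubgroup G ≤ Z ⊓ H := by
    intro x hx
    exact ⟨hRZ hx.2, hx.1⟩
  rw [hcenter] at this
  exact le_bot_iff.mp this
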